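/- Let S_o ∈ R^{n×r} and S_o^⊥ ∈ R^{n×(n−r)} together form an orthonormal basis of R^n (columns of S_o span 𝒮_o and columns of S_o^⊥ span 𝒮_o^⊥). With P_ω a Bernoulli(p) diagonal projection, E[S_oᵀ P_ω S_o^⊥] = 0, and the independent summands A_i := (ε_i − p)·S_oᵀ E_{i,i} S_o^⊥ satisfy ‖A_i‖ ≤ √(η(𝒮_o)·r/n), ‖Σ_i E[A_i A_iᵀ]‖ ≤ p, and ‖Σ_i E[A_iᵀ A_i]‖ ≤ p·η(𝒮_o)·r/n. -/

import Mathlib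

open Matrix MeasureTheory ProbabilityTheory

/-- Spectral (operator) norm of a real matrix. -/
noncomputable def spec {n m : ℕ} (M : Matrix (Fin n) (Fin m) ℝ) : ℝ :=
  ‖LinearMap.toContinuousLinearMap (Matrix.toEuclideanLin M)‖

/-- Coherence of the span of an orthonormal basis matrix `S`:
`(n/r) · max_i ‖S[i,:]‖₂²`. -/
noncomputable def coher {n r : ℕ} (S : Matrix (Fin n) (Fin r) ℝ) : ℝ :=
  (n / r : ℝ) * ⨆ i : Fin n, ∑ j, (S i j) ^ 2

/- ### Auxiliary lemmas -/

lemma spec_nonneg {n m : ℕ} (M : Matrix (Fin n) (Fin m) ℝ) : 0 ≤ spec M :=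
  norm_nonneg _

lemma spec_le_bound {n m : ℕ} (M : Matrix (Fin n) (Fin m) ℝ) {C : ℝ} (hC : 0 ≤ C)
    (h : ∀ x : Fin m → ℝ, ∑ i, (M.mulVec x i) ^ 2 ≤ C ^ 2 * ∑ j, (x j) ^ 2) :
    spec M ≤ C := by
  apply ContinuousLinearMap.opNorm_le_bound _ hC
  intro x
  rw [LinearMap.coe_toContinuousLinearMap']
  have hx : ‖x‖ = Real.sqrt (∑ j, (x j)^2) := by
    rw [EuclideanSpace.norm_eq]
    congr 1; apply Finset.sum_congr rfl; intro j _; rw [Real.norm_eq_abs, sq_abs]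
  have hMx : ‖Matrix.toEuclideanLin M x‖ = Real.sqrt (∑ i, (M.mulVec ((WithLp.equiv 2 _) x) i)^2) := by
    rw [EuclideanSpace.norm_eq]
    congr 1; apply Finset.sum_congr rfl; intro i _
    rw [Real.norm_eq_abs, sq_abs]
    rfl
  rw [hMx, hx]
  rw [← Real.sqrt_sq hC, ← Real.sqrt_mul (by positivity)]
  exact Real.sqrt_le_sqrt (h _)

lemma spec_mul_le {a b c : ℕ} (M : Matrix (Fin a) (Fin b) ℝ) (N : Matrix (Fin b) (Fin c) ℝ) :
    spec (M * N) ≤ spec M * spec N := by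
  have : LinearMap.toContinuousLinearMap (Matrix.toEuclideanLin (M * N)) =
      (LinearMap.toContinuousLinearMap (Matrix.toEuclideanLin M)).comp
        (LinearMap.toContinuousLinearMap (Matrix.toEuclideanLin N)) := by
    ext x
    simp [Matrix.toEuclideanLin_apply, Matrix.mulVec_mulVec]
  rw [spec, this]
  exact ContinuousLinearMap.opNorm_comp_le _ _

lemma spec_smul {a b : ℕ} (c : ℝ) (M : Matrix (Fin a) (Fin b) ℝ) :
    spec (c • M) = |c| * spec M := by
  have : LinearMap.toContinuousLinearMap (Matrix.toEuclideanLin (c • M)) =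
      c • LinearMap.toContinuousLinearMap (Matrix.toEuclideanLin M) := by
    ext x; simp
  rw [spec, this]
  rw [norm_smul c (LinearMap.toContinuousLinearMap (Matrix.toEuclideanLin M)), Real.norm_eq_abs]
  rfl

lemma spec_diagonal_le {a : ℕ} (d : Fin a → ℝ) {C : ℝ} (hC : 0 ≤ C)
    (h : ∀ i, |d i| ≤ C) : spec (Matrix.diagonal d) ≤ C := by
  apply spec_le_bound _ hC
  intro x
  rw [Finset.mul_sum]
  apply Finset.sum_le_sum
  intro i _
  rw [Matrix.mulVec_diagonal, mul_pow]
  have : d i ^ 2 ≤ C ^ 2 := by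
    rw [← sq_abs]
    exact pow_le_pow_left₀ (abs_nonneg _) (h i) 2
  nlinarith [sq_nonneg (x i)]

lemma sum_sq_mulVec {a b : ℕ} (M : Matrix (Fin a) (Fin b) ℝ) (x : Fin b → ℝ) :
    ∑ i, (M.mulVec x i) ^ 2 = x ⬝ᵥ ((Mᵀ * M).mulVec x) := by
  have : ∑ i, (M.mulVec x i) ^ 2 = (M.mulVec x) ⬝ᵥ (M.mulVec x) := by
    simp [dotProduct, sq]
  rw [this, ← Matrix.mulVec_mulVec,
    dotProduct_mulVec x Mᵀ (M.mulVec x), Matrix.vecMul_transpose]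

lemma spec_le_one_of_isometry {a b : ℕ} (M : Matrix (Fin a) (Fin b) ℝ)
    (h : Mᵀ * M = 1) : spec M ≤ 1 := by
  apply spec_le_bound _ zero_le_one
  intro x
  rw [sum_sq_mulVec, h, Matrix.one_mulVec, one_pow, one_mul]
  simp [dotProduct, sq]

lemma spec_transpose_le_one {a b c : ℕ} (M : Matrix (Fin a) (Fin b) ℝ)
    (N : Matrix (Fin a) (Fin c) ℝ) (h : M * Mᵀ + N * Nᵀ = 1) : spec Mᵀ ≤ 1 := by
  apply spec_le_bound _ zero_le_one
  intro x
  rw [sum_sq_mulVec, Matrix.transpose_transpose, one_pow, one_mul]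
  have h2 : M * Mᵀ = 1 - N * Nᵀ := by rw [← h]; abel
  rw [h2, Matrix.sub_mulVec, Matrix.one_mulVec, dotProduct_sub]
  have : 0 ≤ x ⬝ᵥ ((N * Nᵀ).mulVec x) := by
    have hs := sum_sq_mulVec Nᵀ x
    rw [Matrix.transpose_transpose] at hs
    rw [← hs]
    positivity
  have hxx : x ⬝ᵥ x = ∑ j, (x j)^2 := by simp [dotProduct, sq]
  linarith

lemma entry_std {n r m : ℕ} (So : Matrix (Fin n) (Fin r) ℝ) (Sop : Matrix (Fin n) (Fin m) ℝ)
    (i : Fin n) (j : Fin r) (k : Fin m) :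
    (Soᵀ * Matrix.single i i (1 : ℝ) * Sop) j k = So i j * Sop i k := by
  rw [Matrix.mul_apply]
  simp [Matrix.mul_apply, Matrix.single, Matrix.transpose_apply, ite_and,
    Finset.sum_ite_eq, Finset.mul_sum, Finset.sum_mul]

lemma spec_outer_le {n r m : ℕ} (So : Matrix (Fin n) (Fin r) ℝ) (Sop : Matrix (Fin n) (Fin m) ℝ)
    (i : Fin n) :
    spec (Soᵀ * Matrix.single i i (1 : ℝ) * Sop)
      ≤ Real.sqrt (∑ j, So i j ^ 2) * Real.sqrt (∑ k, Sop i k ^ 2) := by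
  apply spec_le_bound _ (by positivity)
  intro x
  have hv : ∀ j, ((Soᵀ * Matrix.single i i (1 : ℝ) * Sop).mulVec x) j
      = So i j * ∑ k, Sop i k * x k := by
    intro j
    rw [Matrix.mulVec, dotProduct]
    rw [Finset.mul_sum]
    apply Finset.sum_congr rfl
    intro k _
    rw [entry_std]
    ring
  calc ∑ j, ((Soᵀ * Matrix.single i i (1:ℝ) * Sop).mulVec x) j ^ 2
      = (∑ j, So i j ^ 2) * (∑ k, Sop i k * x k) ^ 2 := by
        rw [Finset.sum_mul]
        apply Finset.sum_congr rfl
        intro j _; rw [hv]; ring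
    _ ≤ (∑ j, So i j ^ 2) * ((∑ k, Sop i k ^ 2) * ∑ k, x k ^ 2) := by
        apply mul_le_mul_of_nonneg_left (Finset.sum_mul_sq_le_sq_mul_sq _ _ _) (by positivity)
    _ = (Real.sqrt (∑ j, So i j ^ 2) * Real.sqrt (∑ k, Sop i k ^ 2)) ^ 2 * ∑ k, x k ^ 2 := by
        rw [mul_pow, Real.sq_sqrt (by positivity), Real.sq_sqrt (by positivity)]
        ring

section Prob
variable {Ω : Type} [MeasurableSpace Ω] (μ : Measure Ω) [IsProbabilityMeasure μ]

lemma eps_int (f : Ω → ℝ) (hm : Measurable f) (h01 : ∀ ω, f ω = 0 ∨ f ω = 1) :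
    Integrable f μ := by
  apply Integrable.mono' (integrable_const (1:ℝ)) hm.aestronglyMeasurable
  filter_upwards with ω
  rcases h01 ω with h | h <;> simp [h]

lemma int_var (f : Ω → ℝ) (hm : Measurable f) (h01 : ∀ ω, f ω = 0 ∨ f ω = 1)
    {p : ℝ} (hmean : ∫ ω, f ω ∂μ = p) (c : ℝ) :
    ∫ ω, (f ω - p) ^ 2 * c ∂μ = (p - p ^ 2) * c := by
  have key : ∀ ω, (f ω - p) ^ 2 * c = ((1 - 2*p) * c) * f ω + p ^ 2 * c := by
    intro ω
    rcases h01 ω with h | h <;> rw [h] <;> ring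
  simp_rw [key]
  rw [integral_add ((eps_int μ f hm h01).const_mul _) (integrable_const _),
    integral_const_mul, hmean, integral_const]
  simp
  ring

end Prob

/-- Bernoulli-sampled cross term: `S_o ∈ ℝ^{n×r}` and `S_o^⊥ ∈ ℝ^{n×(n−r)}`
together form an orthonormal basis of ℝⁿ; `P_ω = diag(ε₁,…,ε_n)` with `εᵢ`
i.i.d. Bernoulli(p).  With `A_i := (ε_i − p)·S_oᵀ E_{i,i} S_o^⊥`:
(a) `E[S_oᵀ P_ω S_o^⊥] = 0`;
(b) `‖A_i‖ ≤ √(η(𝒮_o)·r/n)` for each i;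
(c) `‖Σᵢ E[A_i A_iᵀ]‖ ≤ p`;
(d) `‖Σᵢ E[A_iᵀ A_i]‖ ≤ p·η(𝒮_o)·r/n`. -/
theorem bernoulli_sampled_cross_term {n r : ℕ} (hn : 0 < n) (hr : 0 < r) (hrn : r ≤ n)
    {Ω : Type} [MeasurableSpace Ω] (μ : Measure Ω) [IsProbabilityMeasure μ]
    (p : ℝ) (hp0 : 0 < p) (hp1 : p ≤ 1)
    (So : Matrix (Fin n) (Fin r) ℝ) (Sop : Matrix (Fin n) (Fin (n - r)) ℝ)
    (hSo : Soᵀ * So = 1) (hSop : Sopᵀ * Sop = 1) (horth : Soᵀ * Sop = 0)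
    (hcomplete : So * Soᵀ + Sop * Sopᵀ = 1)
    (ε : Fin n → Ω → ℝ)
    (hmeas : ∀ i, Measurable (ε i))
    (h01 : ∀ i ω, ε i ω = 0 ∨ ε i ω = 1)
    (hmean : ∀ i, ∫ ω, ε i ω ∂μ = p)
    (hindep : iIndepFun ε μ) :
    -- (a) zero expectation
    (∀ (j : Fin r) (k : Fin (n - r)),
      ∫ ω, (Soᵀ * Matrix.diagonal (fun i => ε i ω) * Sop) j k ∂μ = 0) ∧
    -- (b) bound on each summand
    (∀ (i : Fin n) (ω : Ω),
      spec ((ε i ω - p) • (Soᵀ * Matrix.single i i (1 : ℝ) * Sop))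
        ≤ Real.sqrt (coher So * r / n)) ∧
    -- (c) bound on the first matrix variance
    spec (Matrix.of fun j k : Fin r =>
        ∑ i : Fin n, ∫ ω,
          (((ε i ω - p) • (Soᵀ * Matrix.single i i (1 : ℝ) * Sop)) *
            ((ε i ω - p) • (Soᵀ * Matrix.single i i (1 : ℝ) * Sop))ᵀ) j k ∂μ)
      ≤ p ∧
    -- (d) bound on the second matrix variance
    spec (Matrix.of fun j k : Fin (n - r) =>
        ∑ i : Fin n, ∫ ω,
          (((ε i ω - p) • (Soᵀ * Matrix.single i i (1 : ℝ) * Sop))ᵀ *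
            ((ε i ω - p) • (Soᵀ * Matrix.single i i (1 : ℝ) * Sop))) j k ∂μ)
      ≤ p * coher So * r / n := by
  have hn0 : (n : ℝ) ≠ 0 := Nat.cast_ne_zero.mpr hn.ne'
  have hr0 : (r : ℝ) ≠ 0 := Nat.cast_ne_zero.mpr hr.ne'
  set q : Fin n → ℝ := fun i => ∑ j, So i j ^ 2 with hq
  set w : Fin n → ℝ := fun i => ∑ k, Sop i k ^ 2 with hw
  set s : ℝ := ⨆ i : Fin n, q i with hs
  have hq0 : ∀ i, 0 ≤ q i := fun i => by positivity
  have hw0 : ∀ i, 0 ≤ w i := fun i => by positivity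
  have hdiag : ∀ i, q i + w i = 1 := by
    intro i
    have := congrFun (congrFun hcomplete i) i
    simpa [Matrix.mul_apply, Matrix.add_apply, Matrix.one_apply, Matrix.transpose_apply, sq,
      hq, hw] using this
  have hw1 : ∀ i, w i ≤ 1 := fun i => by have := hdiag i; have := hq0 i; linarith
  have hqs : ∀ i, q i ≤ s :=
    fun i => le_ciSup (Set.Finite.bddAbove (Set.finite_range q)) i
  have hs0 : 0 ≤ s := le_trans (hq0 ⟨0, hn⟩) (hqs ⟨0, hn⟩)
  have hcoher : coher So * r / n = s := by
    rw [coher]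
    field_simp
    rfl
  have hcε : ∀ i ω, |ε i ω - p| ≤ 1 := by
    intro i ω
    rcases h01 i ω with h | h <;> rw [h, abs_le] <;> constructor <;> linarith
  have hpp : 0 ≤ p - p ^ 2 := by nlinarith
  refine ⟨?_, ?_, ?_, ?_⟩
  · -- (a)
    intro j k
    have hentry : ∀ ω : Ω, (Soᵀ * Matrix.diagonal (fun i => ε i ω) * Sop) j k
        = ∑ l, (So l j * Sop l k) * ε l ω := by
      intro ω
      rw [Matrix.mul_apply]
      apply Finset.sum_congr rfl
      intro l _
      rw [Matrix.mul_diagonal, Matrix.transpose_apply]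
      ring
    simp_rw [hentry]
    rw [integral_finset_sum _ (fun l _ => (eps_int μ (ε l) (hmeas l) (h01 l)).const_mul _)]
    have : ∀ l : Fin n, ∫ ω, (So l j * Sop l k) * ε l ω ∂μ = (So l j * Sop l k) * p := by
      intro l
      rw [integral_const_mul, hmean]
    simp_rw [this]
    have : ∑ l, (So l j * Sop l k) * p = p * (Soᵀ * Sop) j k := by
      rw [Matrix.mul_apply, Finset.mul_sum]
      apply Finset.sum_congr rfl
      intro l _
      rw [Matrix.transpose_apply]
      ring
    rw [this, horth]
    simp
  · -- (b)
    intro i ω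
    rw [spec_smul]
    calc |ε i ω - p| * spec (Soᵀ * Matrix.single i i (1:ℝ) * Sop)
        ≤ 1 * (Real.sqrt (q i) * Real.sqrt (w i)) :=
          mul_le_mul (hcε i ω) (spec_outer_le So Sop i) (spec_nonneg _) zero_le_one
      _ = Real.sqrt (q i) * Real.sqrt (w i) := one_mul _
      _ ≤ Real.sqrt s * 1 := by
          apply mul_le_mul (Real.sqrt_le_sqrt (hqs i)) ?_ (Real.sqrt_nonneg _) (Real.sqrt_nonneg _)
          rw [← Real.sqrt_one]
          exact Real.sqrt_le_sqrt (hw1 i)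
      _ = Real.sqrt (coher So * r / n) := by rw [mul_one, hcoher]
  · -- (c)
    have hMc : (Matrix.of fun j k : Fin r =>
        ∑ i : Fin n, ∫ ω,
          (((ε i ω - p) • (Soᵀ * Matrix.single i i (1 : ℝ) * Sop)) *
            ((ε i ω - p) • (Soᵀ * Matrix.single i i (1 : ℝ) * Sop))ᵀ) j k ∂μ)
        = Soᵀ * Matrix.diagonal (fun i => (p - p ^ 2) * w i) * So := by
      ext j k
      rw [Matrix.of_apply]
      have hpt : ∀ (i : Fin n) (ω : Ω),
          (((ε i ω - p) • (Soᵀ * Matrix.single i i (1 : ℝ) * Sop)) *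
            ((ε i ω - p) • (Soᵀ * Matrix.single i i (1 : ℝ) * Sop))ᵀ) j k
          = (ε i ω - p) ^ 2 * (So i j * So i k * w i) := by
        intro i ω
        have hX : ((Soᵀ * Matrix.single i i (1:ℝ) * Sop) *
            (Soᵀ * Matrix.single i i (1:ℝ) * Sop)ᵀ) j k = So i j * So i k * w i := by
          rw [Matrix.mul_apply, hw, Finset.mul_sum]
          apply Finset.sum_congr rfl
          intro m _
          rw [Matrix.transpose_apply, entry_std, entry_std]
          ring
        simp only [Matrix.transpose_smul, Matrix.smul_mul, Matrix.mul_smul, Matrix.smul_apply,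
          smul_eq_mul]
        rw [hX]
        ring
      simp_rw [hpt]
      have hiv : ∀ i : Fin n, ∫ ω, (ε i ω - p) ^ 2 * (So i j * So i k * w i) ∂μ
          = (p - p ^ 2) * (So i j * So i k * w i) :=
        fun i => int_var μ (ε i) (hmeas i) (h01 i) (hmean i) _
      simp_rw [hiv]
      rw [Matrix.mul_apply]
      apply Finset.sum_congr rfl
      intro i _
      rw [Matrix.mul_diagonal, Matrix.transpose_apply]
      ring
    rw [hMc]
    have hD : spec (Matrix.diagonal (fun i => (p - p ^ 2) * w i)) ≤ p := by
      apply spec_diagonal_le _ hp0.le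
      intro i
      rw [abs_of_nonneg (mul_nonneg hpp (hw0 i))]
      nlinarith [hw1 i, hw0 i, hpp, sq_nonneg p]
    have hT : spec Soᵀ ≤ 1 := spec_transpose_le_one So Sop hcomplete
    have hS : spec So ≤ 1 := spec_le_one_of_isometry So hSo
    calc spec (Soᵀ * Matrix.diagonal (fun i => (p - p ^ 2) * w i) * So)
        ≤ spec (Soᵀ * Matrix.diagonal (fun i => (p - p ^ 2) * w i)) * spec So :=
          spec_mul_le _ _
      _ ≤ (spec Soᵀ * spec (Matrix.diagonal (fun i => (p - p ^ 2) * w i))) * spec So :=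
          mul_le_mul_of_nonneg_right (spec_mul_le _ _) (spec_nonneg _)
      _ ≤ (1 * p) * 1 := by
          apply mul_le_mul _ hS (spec_nonneg _) (by positivity)
          exact mul_le_mul hT hD (spec_nonneg _) zero_le_one
      _ = p := by ring
  · -- (d)
    have hMd : (Matrix.of fun j k : Fin (n - r) =>
        ∑ i : Fin n, ∫ ω,
          (((ε i ω - p) • (Soᵀ * Matrix.single i i (1 : ℝ) * Sop))ᵀ *
            ((ε i ω - p) • (Soᵀ * Matrix.single i i (1 : ℝ) * Sop))) j k ∂μ)
        = Sopᵀ * Matrix.diagonal (fun i => (p - p ^ 2) * q i) * Sop := by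
      ext j k
      rw [Matrix.of_apply]
      have hpt : ∀ (i : Fin n) (ω : Ω),
          (((ε i ω - p) • (Soᵀ * Matrix.single i i (1 : ℝ) * Sop))ᵀ *
            ((ε i ω - p) • (Soᵀ * Matrix.single i i (1 : ℝ) * Sop))) j k
          = (ε i ω - p) ^ 2 * (Sop i j * Sop i k * q i) := by
        intro i ω
        have hX : ((Soᵀ * Matrix.single i i (1:ℝ) * Sop)ᵀ *
            (Soᵀ * Matrix.single i i (1:ℝ) * Sop)) j k = Sop i j * Sop i k * q i := by
          rw [Matrix.mul_apply, hq, Finset.mul_sum]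
          apply Finset.sum_congr rfl
          intro m _
          rw [Matrix.transpose_apply, entry_std, entry_std]
          ring
        simp only [Matrix.transpose_smul, Matrix.smul_mul, Matrix.mul_smul, Matrix.smul_apply,
          smul_eq_mul]
        rw [hX]
        ring
      simp_rw [hpt]
      have hiv : ∀ i : Fin n, ∫ ω, (ε i ω - p) ^ 2 * (Sop i j * Sop i k * q i) ∂μ
          = (p - p ^ 2) * (Sop i j * Sop i k * q i) :=
        fun i => int_var μ (ε i) (hmeas i) (h01 i) (hmean i) _
      simp_rw [hiv]
      rw [Matrix.mul_apply]
      apply Finset.sum_congr rfl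
      intro i _
      rw [Matrix.mul_diagonal, Matrix.transpose_apply]
      ring
    rw [hMd]
    have hps : 0 ≤ p * s := mul_nonneg hp0.le hs0
    have hD : spec (Matrix.diagonal (fun i => (p - p ^ 2) * q i)) ≤ p * s := by
      apply spec_diagonal_le _ hps
      intro i
      rw [abs_of_nonneg (mul_nonneg hpp (hq0 i))]
      nlinarith [hqs i, hq0 i, hpp, hs0, hp0.le, sq_nonneg p]
    have hT : spec Sopᵀ ≤ 1 := by
      apply spec_transpose_le_one Sop So
      rw [← hcomplete]; abel
    have hS : spec Sop ≤ 1 := spec_le_one_of_isometry Sop hSop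
    have hfinal : p * coher So * r / n = p * s := by
      rw [← hcoher]; ring
    rw [hfinal]
    calc spec (Sopᵀ * Matrix.diagonal (fun i => (p - p ^ 2) * q i) * Sop)
        ≤ spec (Sopᵀ * Matrix.diagonal (fun i => (p - p ^ 2) * q i)) * spec Sop :=
          spec_mul_le _ _
      _ ≤ (spec Sopᵀ * spec (Matrix.diagonal (fun i => (p - p ^ 2) * q i))) * spec Sop :=
          mul_le_mul_of_nonneg_right (spec_mul_le _ _) (spec_nonneg _)
      _ ≤ (1 * (p * s)) * 1 := by
          apply mul_le_mul _ hS (spec_nonneg _) (by positivity)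
          exact mul_le_mul hT hD (spec_nonneg _) zero_le_one
      _ = p * s := by ring
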